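/- Let (X_k)_{k≥1} be independent random variables with P[X_k = 1] = P[X_k = -1] = 1/2, let S_0 = 0, S_m = X_1 + ... + X_m, and let Y_n = max_{0 ≤ m ≤ n} S_m. Then for every integer y with 0 ≤ y ≤ n, P[Y_n = y] = C(n, ⌊(n + y + 1)/2⌋) · 2^{-n}, where C(n,k) denotes the binomial coefficient. -/

import Mathlib

open MeasureTheory Filter Set

/-- value of a Bool step -/
def ev (x : Bool) : ℤ := if x then 1 else -1

/-- extend a finite Bool vector to ℕ → ℤ -/
def ex (n : ℕ) (b : Fin n → Bool) : ℕ → ℤ := fun j => if h : j < n then ev (b ⟨j, h⟩) else 0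

/-- running maximum of walk with steps g over times 0..n -/
def wm (n : ℕ) (g : ℕ → ℤ) : ℤ :=
  (Finset.range (n+1)).sup' Finset.nonempty_range_add_one (fun m => ∑ j ∈ Finset.range m, g j)

lemma wm_nonneg (n : ℕ) (g : ℕ → ℤ) : 0 ≤ wm n g := by
  have := Finset.le_sup' (f := fun m => ∑ j ∈ Finset.range m, g j)
    (s := Finset.range (n+1)) (b := 0) (by simp)
  exact (by simp : (0:ℤ) ≤ ∑ j ∈ Finset.range 0, g j).trans this

lemma wm_le (n : ℕ) (g : ℕ → ℤ) (hg : ∀ j, g j ≤ 1) : wm n g ≤ n := by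
  apply Finset.sup'_le
  intro m hm
  have hm' : m ≤ n := by simpa [Nat.lt_succ_iff] using hm
  calc ∑ j ∈ Finset.range m, g j ≤ ∑ j ∈ Finset.range m, 1 :=
        Finset.sum_le_sum fun j _ => hg j
    _ = (m : ℤ) := by simp
    _ ≤ n := by exact_mod_cast hm'

lemma wm_congr (n : ℕ) (g h : ℕ → ℤ) (hgh : ∀ j < n, g j = h j) : wm n g = wm n h := by
  unfold wm
  apply Finset.sup'_congr _ rfl
  intro m hm
  apply Finset.sum_congr rfl
  intro j hj
  exact hgh j (lt_of_lt_of_le (Finset.mem_range.mp hj)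
    (by simpa [Nat.lt_succ_iff] using hm))

lemma wm_succ (n : ℕ) (g : ℕ → ℤ) :
    wm (n+1) g = max 0 (g 0 + wm n (fun j => g (j+1))) := by
  have hne : ((Finset.range (n+1)).image (· + 1)).Nonempty :=
    Finset.Nonempty.image Finset.nonempty_range_add_one _
  have hins : Finset.range (n+1+1) = insert 0 ((Finset.range (n+1)).image (· + 1)) := by
    ext k
    simp only [Finset.mem_range, Finset.mem_insert, Finset.mem_image]
    constructor
    · intro hk
      rcases k with _ | k
      · exact Or.inl rfl
      · exact Or.inr ⟨k, by omega, rfl⟩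
    · rintro (rfl | ⟨x, hx, rfl⟩) <;> omega
  have hgen : ∀ (s t : Finset ℕ) (hs : s.Nonempty) (ht : t.Nonempty) (f : ℕ → ℤ),
      s = t → s.sup' hs f = t.sup' ht f := by
    rintro s t hs ht f rfl; rfl
  unfold wm
  rw [hgen _ _ Finset.nonempty_range_add_one (hins ▸ Finset.nonempty_range_add_one) _ hins,
    Finset.sup'_insert (H := hne)]
  rw [Finset.sup'_image hne (fun m => ∑ j ∈ Finset.range m, g j)]
  have hsum : ∀ k ∈ Finset.range (n+1),
      ∑ j ∈ Finset.range (k+1), g j = g 0 + ∑ j ∈ Finset.range k, g (j+1) := by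
    intro k _
    rw [Finset.sum_range_succ']
    ring
  simp only [Function.comp, Finset.range_zero, Finset.sum_empty]
  rw [Finset.sup'_congr Finset.nonempty_range_add_one rfl hsum]
  have hdist := Finset.comp_sup'_eq_sup'_comp (α := ℤ)
    (s := Finset.range (n+1)) Finset.nonempty_range_add_one
    (f := fun k => ∑ j ∈ Finset.range k, g (j+1)) (fun x => g 0 + x)
    (fun x y => by simp [max_add_add_left])
  simp only [Function.comp] at hdist
  rw [← hdist]

lemma ev_le_one (x : Bool) : ev x ≤ 1 := by cases x <;> simp [ev]

lemma ex_le_one (n : ℕ) (b : Fin n → Bool) (j : ℕ) : ex n b j ≤ 1 := by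
  unfold ex
  split
  · exact ev_le_one _
  · norm_num

lemma wm_ex_cons (n : ℕ) (x : Bool) (b : Fin n → Bool) :
    wm (n+1) (ex (n+1) (Fin.cons x b)) = max 0 (ev x + wm n (ex n b)) := by
  rw [wm_succ]
  congr 1
  congr 1
  · apply wm_congr
    intro j hj
    show ex (n+1) (Fin.cons x b) (j+1) = ex n b j
    unfold ex
    rw [dif_pos (by omega), dif_pos hj]
    have : (⟨j+1, by omega⟩ : Fin (n+1)) = Fin.succ ⟨j, hj⟩ := rfl
    rw [this, Fin.cons_succ]

/-- number of walks of length n with running max y -/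
def cnt (n : ℕ) (y : ℤ) : ℕ :=
  (Finset.univ.filter fun b : Fin n → Bool => wm n (ex n b) = y).card

lemma card_cons_split (n : ℕ) (p : (Fin (n+1) → Bool) → Prop) [DecidablePred p] :
    (Finset.univ.filter p).card
      = (Finset.univ.filter fun c : Fin n → Bool => p (Fin.cons true c)).card
        + (Finset.univ.filter fun c : Fin n → Bool => p (Fin.cons false c)).card := by
  simp only [Finset.card_filter]
  rw [← Fintype.sum_equiv (Fin.consEquiv (fun _ : Fin (n+1) => Bool))
        (fun q => if p (Fin.cons q.1 q.2) then (1:ℕ) else 0)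
        (fun b => if p b then 1 else 0) (fun q => rfl)]
  rw [Fintype.sum_prod_type, Fintype.sum_bool]

lemma cnt_succ_pos (n : ℕ) (y : ℤ) (hy : 1 ≤ y) :
    cnt (n+1) y = cnt n (y-1) + cnt n (y+1) := by
  unfold cnt
  rw [card_cons_split n (fun b => wm (n+1) (ex (n+1) b) = y)]
  congr 1
  · apply Finset.card_bij (fun c _ => c) ?_ (by intros; assumption) ?_
    · intro c hc
      simp only [Finset.mem_filter, Finset.mem_univ, true_and] at hc ⊢
      rw [wm_ex_cons] at hc
      have h0 := wm_nonneg n (ex n c)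
      rw [max_eq_right (by simp [ev] at hc ⊢; omega)] at hc
      simp [ev] at hc
      omega
    · intro c hc
      simp only [Finset.mem_filter, Finset.mem_univ, true_and] at hc
      refine ⟨c, ?_, rfl⟩
      simp only [Finset.mem_filter, Finset.mem_univ, true_and]
      rw [wm_ex_cons]
      rw [max_eq_right (by simp [ev]; omega)]
      simp [ev]
      omega
  · apply Finset.card_bij (fun c _ => c) ?_ (by intros; assumption) ?_
    · intro c hc
      simp only [Finset.mem_filter, Finset.mem_univ, true_and] at hc ⊢
      rw [wm_ex_cons] at hc
      have h0 := wm_nonneg n (ex n c)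
      simp only [ev, Bool.false_eq_true, if_false] at hc
      rcases le_or_gt 1 (wm n (ex n c)) with h1 | h1
      · rw [max_eq_right (by omega)] at hc
        omega
      · rw [max_eq_left (by omega)] at hc
        omega
    · intro c hc
      simp only [Finset.mem_filter, Finset.mem_univ, true_and] at hc
      refine ⟨c, ?_, rfl⟩
      simp only [Finset.mem_filter, Finset.mem_univ, true_and]
      rw [wm_ex_cons]
      simp only [ev, Bool.false_eq_true, if_false]
      rw [max_eq_right (by omega)]
      omega

lemma cnt_succ_zero (n : ℕ) : cnt (n+1) 0 = cnt n 0 + cnt n 1 := by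
  unfold cnt
  rw [card_cons_split n (fun b => wm (n+1) (ex (n+1) b) = 0)]
  have h1 : (Finset.univ.filter fun c : Fin n → Bool =>
      wm (n+1) (ex (n+1) (Fin.cons true c)) = 0) = ∅ := by
    apply Finset.filter_false_of_mem
    intro c _
    rw [wm_ex_cons]
    have h0 := wm_nonneg n (ex n c)
    simp only [ev, if_true]
    rw [max_eq_right (by omega)]
    omega
  rw [h1, Finset.card_empty, Nat.zero_add]
  have h2 : ∀ c : Fin n → Bool,
      (wm (n+1) (ex (n+1) (Fin.cons false c)) = 0)
        ↔ (wm n (ex n c) = 0 ∨ wm n (ex n c) = 1) := by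
    intro c
    rw [wm_ex_cons]
    have h0 := wm_nonneg n (ex n c)
    simp only [ev, Bool.false_eq_true, if_false]
    rcases le_or_gt 1 (wm n (ex n c)) with h | h
    · rw [max_eq_right (by omega)]; omega
    · rw [max_eq_left (by omega)]; omega
  rw [Finset.filter_congr (fun c _ => h2 c), Finset.filter_or,
    Finset.card_union_of_disjoint]
  rw [Finset.disjoint_left]
  intro c hc hc'
  simp only [Finset.mem_filter] at hc hc'
  omega

lemma wm_zero (g : ℕ → ℤ) : wm 0 g = 0 := by
  apply le_antisymm _ (wm_nonneg 0 g)
  apply Finset.sup'_le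
  intro m hm
  have : m = 0 := by simpa using hm
  subst this
  simp

lemma cnt_closed : ∀ n (y : ℕ), cnt n y = n.choose ((n + y + 1)/2) := by
  intro n
  induction n with
  | zero =>
    intro y
    unfold cnt
    rcases y with _ | k
    · rw [Finset.filter_true_of_mem (fun b _ => by rw [wm_zero]; simp)]
      simp
    · rw [Finset.filter_false_of_mem (fun b _ => by rw [wm_zero]; simp; omega)]
      rw [Finset.card_empty, Nat.choose_eq_zero_of_lt (by omega)]
  | succ n ih =>
    intro y
    rcases y with _ | k
    · rw [Nat.cast_zero, cnt_succ_zero]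
      have e0 := ih 0
      have e1 := ih 1
      rw [Nat.cast_zero] at e0
      rw [Nat.cast_one] at e1
      rw [e0, e1]
      rcases Nat.even_or_odd n with ⟨m, hm⟩ | ⟨m, hm⟩
      · subst hm
        have d1 : (m + m + 0 + 1)/2 = m := by omega
        have d2 : (m + m + 1 + 1)/2 = m+1 := by omega
        have d3 : (m + m + 1 + 0 + 1)/2 = m+1 := by omega
        rw [d1, d2]
        exact (Nat.choose_succ_succ (m+m) m).symm
      · subst hm
        have d1 : (2*m + 1 + 0 + 1)/2 = m+1 := by omega
        have d2 : (2*m + 1 + 1 + 1)/2 = m+1 := by omega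
        rw [d1, d2]
        have hsymm : (2*m+1).choose m = (2*m+1).choose (m+1) := by
          have := Nat.choose_symm (n := 2*m+1) (k := m+1) (by omega)
          have hsub : 2*m+1 - (m+1) = m := by omega
          rw [hsub] at this
          exact this
        have hp : (2*m+1+1).choose (m+1) = (2*m+1).choose m + (2*m+1).choose (m+1) :=
          Nat.choose_succ_succ (2*m+1) m
        rw [hp, hsymm]
    · have hrec := cnt_succ_pos n (((k+1:ℕ)):ℤ) (by push_cast; omega)
      rw [hrec, show (((k+1:ℕ)):ℤ)-1 = ((k:ℕ):ℤ) by push_cast; ring,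
        show (((k+1:ℕ)):ℤ)+1 = ((k+2:ℕ):ℤ) by push_cast; ring, ih k, ih (k+2)]
      have d1 : (n + (k+2) + 1)/2 = (n + k + 1)/2 + 1 := by omega
      have d2 : (n + 1 + (k+1) + 1)/2 = (n + k + 1)/2 + 1 := by omega
      rw [d1, d2]
      exact (Nat.choose_succ_succ n ((n+k+1)/2)).symm

/-- Distribution of the running maximum of the simple symmetric random walk:
`P[Y_n = y] = C(n, ⌊(n + y + 1)/2⌋) · 2^{-n}` for `0 ≤ y ≤ n`. -/
theorem stmt4 {Ω : Type*} {mΩ : MeasurableSpace Ω} (P : Measure Ω) [IsProbabilityMeasure P]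
    (X : ℕ → Ω → ℤ) (hmeas : ∀ k, Measurable (X k))
    (hindep : ProbabilityTheory.iIndepFun X P)
    (hdist : ∀ k, P {ω | X k ω = 1} = 1 / 2 ∧ P {ω | X k ω = -1} = 1 / 2)
    (n : ℕ) :
    ∀ y : ℕ, y ≤ n →
      P {ω | (Finset.range (n + 1)).sup' Finset.nonempty_range_add_one
            (fun m => ∑ j ∈ Finset.range m, X (j + 1) ω) = (y : ℤ)} =
        (n.choose ((n + y + 1) / 2) : ENNReal) / 2 ^ n := by
  intro y hy
  -- cylinders
  set cyl : (Fin n → Bool) → Set Ω :=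
    fun b => ⋂ i ∈ Finset.range n, X (i+1) ⁻¹' {ex n b i} with hcyl_def
  have hcyl_meas : ∀ b, MeasurableSet (cyl b) :=
    fun b => Finset.measurableSet_biInter _
      (fun i _ => (hmeas (i+1)) (measurableSet_singleton _))
  -- probability of a single cylinder
  have hhalf : ∀ k (x : Bool), P (X k ⁻¹' {ev x}) = 1/2 := by
    intro k x
    cases x
    · have h : X k ⁻¹' {ev false} = {ω | X k ω = -1} := by ext ω; simp [ev]
      rw [h]; exact (hdist k).2
    · have h : X k ⁻¹' {ev true} = {ω | X k ω = 1} := by ext ω; simp [ev]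
      rw [h]; exact (hdist k).1
  have hcylP : ∀ b, P (cyl b) = (1/2 : ENNReal)^n := by
    intro b
    have h := hindep.measure_inter_preimage_eq_mul ((Finset.range n).image (· + 1))
      (sets := fun k => {ex n b (k-1)}) (fun i _ => measurableSet_singleton _)
    rw [Finset.set_biInter_finset_image] at h
    rw [Finset.prod_image (by intro a _ c _ h; simp only at h; omega)] at h
    have hL : cyl b = ⋂ i ∈ Finset.range n, X (i+1) ⁻¹' {ex n b (i+1-1)} := by
      simp [hcyl_def]
    rw [hL, h]
    have : ∀ i ∈ Finset.range n, P (X (i+1) ⁻¹' {ex n b (i+1-1)}) = (1/2 : ENNReal) := by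
      intro i hi
      have hi' : i < n := Finset.mem_range.mp hi
      have : ex n b (i+1-1) = ev (b ⟨i, hi'⟩) := by
        simp [ex, hi']
      rw [this, hhalf]
    rw [Finset.prod_congr rfl this, Finset.prod_const, Finset.card_range]
  -- the bad null set
  set N : Set Ω := ⋃ i ∈ Finset.range n, {ω | X (i+1) ω ≠ 1 ∧ X (i+1) ω ≠ -1} with hN_def
  have hN : P N = 0 := by
    rw [hN_def]
    refine measure_biUnion_null_iff (Finset.countable_toSet _) |>.mpr ?_
    intro i _
    set k := i + 1
    have h1 := (hdist k).1
    have h2 := (hdist k).2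
    have hd : Disjoint {ω | X k ω = 1} {ω | X k ω = -1} := by
      rw [Set.disjoint_left]
      intro ω hω hω'
      simp only [Set.mem_setOf_eq] at hω hω'
      omega
    have hmu : MeasurableSet ({ω | X k ω = 1} ∪ {ω | X k ω = -1}) := by
      apply MeasurableSet.union
      · exact (hmeas k) (measurableSet_singleton 1)
      · exact (hmeas k) (measurableSet_singleton (-1))
    have hP : P ({ω | X k ω = 1} ∪ {ω | X k ω = -1}) = 1 := by
      rw [measure_union hd ((hmeas k) (measurableSet_singleton (-1))), h1, h2]
      rw [one_div, ENNReal.inv_two_add_inv_two]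
    have : {ω | X k ω ≠ 1 ∧ X k ω ≠ -1} = ({ω | X k ω = 1} ∪ {ω | X k ω = -1})ᶜ := by
      ext ω; simp [Set.mem_union, Set.mem_compl_iff]
    rw [this, measure_compl hmu (measure_ne_top _ _), hP, measure_univ]
    simp
  -- the event
  set E : Set Ω := {ω | (Finset.range (n + 1)).sup' Finset.nonempty_range_add_one
      (fun m => ∑ j ∈ Finset.range m, X (j + 1) ω) = (y : ℤ)} with hE_def
  -- on a cylinder, the running max is deterministic
  have hdet : ∀ b (ω : Ω), ω ∈ cyl b →
      (Finset.range (n + 1)).sup' Finset.nonempty_range_add_one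
        (fun m => ∑ j ∈ Finset.range m, X (j + 1) ω) = wm n (ex n b) := by
    intro b ω hω
    simp only [hcyl_def, Set.mem_iInter, Set.mem_preimage, Set.mem_singleton_iff] at hω
    unfold wm
    apply Finset.sup'_congr _ rfl
    intro m hm
    apply Finset.sum_congr rfl
    intro j hj
    exact hω j (Finset.mem_range.mpr (by
      have := Finset.mem_range.mp hj
      have := Finset.mem_range.mp hm
      omega))
  set V : Finset (Fin n → Bool) :=
    Finset.univ.filter (fun b => wm n (ex n b) = (y : ℤ)) with hV_def
  have hsub1 : (⋃ b ∈ V, cyl b) ⊆ E := by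
    intro ω hω
    simp only [Set.mem_iUnion] at hω
    obtain ⟨b, hbV, hωb⟩ := hω
    have hb := (Finset.mem_filter.mp hbV).2
    simp only [hE_def, Set.mem_setOf_eq]
    rw [hdet b ω hωb, hb]
  have hsub2 : E ⊆ (⋃ b ∈ V, cyl b) ∪ N := by
    intro ω hω
    by_cases hωN : ω ∈ N
    · exact Or.inr hωN
    · left
      set b : Fin n → Bool := fun i => decide (X (i.val+1) ω = 1) with hb_def
      have hωb : ω ∈ cyl b := by
        simp only [hcyl_def, Set.mem_iInter, Set.mem_preimage, Set.mem_singleton_iff]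
        intro i hi
        have hi' : i < n := Finset.mem_range.mp hi
        have hne : ¬ (X (i+1) ω ≠ 1 ∧ X (i+1) ω ≠ -1) := by
          intro hcon
          exact hωN (Set.mem_biUnion hi hcon)
        have hex : ex n b i = ev (b ⟨i, hi'⟩) := by simp [ex, hi']
        rw [hex, hb_def]
        rcases Classical.em (X (i+1) ω = 1) with h1 | h1
        · simp [ev, h1]
        · have h2 : X (i+1) ω = -1 := by tauto
          simp [ev, h1, h2]
      have hbV : b ∈ V := by
        rw [hV_def, Finset.mem_filter]
        refine ⟨Finset.mem_univ _, ?_⟩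
        rw [← hdet b ω hωb]
        exact hω
      exact Set.mem_biUnion hbV hωb
  have hdisj : (↑V : Set (Fin n → Bool)).PairwiseDisjoint cyl := by
    intro b _ b' _ hbb'
    rw [Function.onFun, Set.disjoint_left]
    intro ω hωb hωb'
    apply hbb'
    funext i
    simp only [hcyl_def, Set.mem_iInter, Set.mem_preimage, Set.mem_singleton_iff] at hωb hωb'
    have h1 := hωb i.val (Finset.mem_range.mpr i.isLt)
    have h2 := hωb' i.val (Finset.mem_range.mpr i.isLt)
    have heq : ex n b i.val = ex n b' i.val := by rw [← h1, ← h2]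
    simp only [ex, i.isLt, dif_pos] at heq
    have hbi : b ⟨i.val, i.isLt⟩ = b' ⟨i.val, i.isLt⟩ := by
      cases hb : b ⟨i.val, i.isLt⟩ <;> cases hb' : b' ⟨i.val, i.isLt⟩ <;>
        simp [hb, hb', ev] at heq ⊢
    exact hbi
  have hPU : P (⋃ b ∈ V, cyl b) = V.card * (1/2 : ENNReal)^n := by
    rw [measure_biUnion_finset hdisj (fun b _ => hcyl_meas b)]
    rw [Finset.sum_congr rfl (fun b _ => hcylP b), Finset.sum_const, Finset.card_filter]
    simp [nsmul_eq_mul]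
  have hPE : P E = V.card * (1/2 : ENNReal)^n := by
    apply le_antisymm
    · calc P E ≤ P ((⋃ b ∈ V, cyl b) ∪ N) := measure_mono hsub2
        _ ≤ P (⋃ b ∈ V, cyl b) + P N := measure_union_le _ _
        _ = V.card * (1/2 : ENNReal)^n := by rw [hN, hPU, add_zero]
    · rw [← hPU]; exact measure_mono hsub1
  rw [hPE]
  have hcard : V.card = n.choose ((n + y + 1)/2) := by
    rw [hV_def]
    exact cnt_closed n y
  rw [hcard]
  rw [one_div, ← ENNReal.inv_pow, ← div_eq_mul_inv]
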